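/- Let Z ≥ 2 be an integer and consider the MBSP instance given by the DAG G'(Z) with P = 5 processors, g = 0, L = 0, and cache capacity r = Σ_{v∈V} μ(v). Then: (a) the minimum synchronous cost over all valid schedules equals 4Z − 2; (b) there exists a valid schedule with synchronous cost 4Z − 2 whose asynchronous cost is at least 4Z − 2; (c) there exists a valid schedule with asynchronous cost at most 3Z − 1. -/

import Mathlib

namespace MBSP

/-- A transition (pebbling move) of a single processor. -/
inductive Op (ν : Type) where
  | load : ν → Op ν
  | save : ν → Op ν
  | compute : ν → Op ν
  | delete : ν → Op ν
deriving DecidableEq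

/-- An MBSP instance: a DAG with compute weights `ω`, memory weights `μ`,
`P` processors, cache capacity `r`, communication cost `g` and synchronization cost `L`. -/
structure Inst (ν : Type) where
  edge : ν → ν → Prop
  ω : ν → ℝ
  μ : ν → ℝ
  P : ℕ
  r : ℝ
  g : ℝ
  L : ℝ

variable {ν : Type} [DecidableEq ν]

def isSource (I : Inst ν) (v : ν) : Prop := ¬ ∃ u, I.edge u v

def isSink (I : Inst ν) (v : ν) : Prop := ¬ ∃ u, I.edge v u

def Acyclic (I : Inst ν) : Prop := ∀ v, ¬ Relation.TransGen I.edge v v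

def opCost (I : Inst ν) : Op ν → ℝ
  | .load v => I.μ v * I.g
  | .save v => I.μ v * I.g
  | .compute v => I.ω v
  | .delete _ => 0

def applyOp (R B : Finset ν) : Op ν → Finset ν × Finset ν
  | .load v => (insert v R, B)
  | .save v => (R, insert v B)
  | .compute v => (insert v R, B)
  | .delete v => (R.erase v, B)

def opOK (I : Inst ν) (R B : Finset ν) : Op ν → Prop
  | .load v => v ∈ B
  | .save v => v ∈ R
  | .compute v => (∃ u, I.edge u v) ∧ ∀ u, I.edge u v → u ∈ R
  | .delete _ => True

/-- The memory bound for a cache content `R`. -/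
def memOK (I : Inst ν) (R : Finset ν) : Prop := ∑ v ∈ R, I.μ v ≤ I.r

/-- Run a sequence of transitions of one processor on a pair (cache, slow memory). -/
def run (R B : Finset ν) : List (Op ν) → Finset ν × Finset ν
  | [] => (R, B)
  | op :: rest => run (applyOp R B op).1 (applyOp R B op).2 rest

/-- Validity of a sequence of transitions of one processor: every precondition holds
when the transition is applied and the memory bound holds throughout. -/
def seqValid (I : Inst ν) (R B : Finset ν) : List (Op ν) → Prop
  | [] => True
  | op :: rest => opOK I R B op ∧ memOK I (applyOp R B op).1 ∧
      seqValid I (applyOp R B op).1 (applyOp R B op).2 rest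

/-- A superstep: for every processor, a compute phase (computes and deletes),
then a save phase, a delete phase and a load phase. -/
structure Superstep (ν : Type) (P : ℕ) where
  comp : Fin P → List (Op ν)
  save : Fin P → List ν
  del : Fin P → List ν
  load : Fin P → List ν

structure Config (ν : Type) (P : ℕ) where
  R : Fin P → Finset ν
  B : Finset ν

abbrev Schedule (ν : Type) (P : ℕ) := List (Superstep ν P)

variable {P : ℕ}

def compOnly (l : List (Op ν)) : Prop :=
  ∀ op ∈ l, (∃ v, op = Op.compute v) ∨ (∃ v, op = Op.delete v)

def afterComp (c : Config ν P) (S : Superstep ν P) (p : Fin P) : Finset ν :=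
  (run (c.R p) c.B (S.comp p)).1

/-- The shared slow memory after the save phases of all processors. -/
def newB (c : Config ν P) (S : Superstep ν P) : Finset ν :=
  c.B ∪ Finset.univ.biUnion (fun p => (S.save p).toFinset)

def afterDel (c : Config ν P) (S : Superstep ν P) (p : Fin P) : Finset ν :=
  (S.del p).foldl Finset.erase (afterComp c S p)

def afterLoad (c : Config ν P) (S : Superstep ν P) (p : Fin P) : Finset ν :=
  afterDel c S p ∪ (S.load p).toFinset

/-- The configuration reached after executing a superstep. -/
def stepConfig (c : Config ν P) (S : Superstep ν P) : Config ν P :=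
  ⟨fun p => afterLoad c S p, newB c S⟩

/-- Validity of a superstep at a configuration. -/
def ssValid (I : Inst ν) (c : Config ν I.P) (S : Superstep ν I.P) : Prop :=
  (∀ p, compOnly (S.comp p)) ∧
  (∀ p, seqValid I (c.R p) c.B (S.comp p)) ∧
  (∀ p, ∀ v ∈ S.save p, v ∈ afterComp c S p) ∧
  (∀ p, ∀ v ∈ S.load p, v ∈ newB c S) ∧
  (∀ p, memOK I (afterLoad c S p))

def runSched (c : Config ν P) : Schedule ν P → Config ν P
  | [] => c
  | S :: rest => runSched (stepConfig c S) rest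

def schedValidFrom (I : Inst ν) (c : Config ν I.P) : Schedule ν I.P → Prop
  | [] => True
  | S :: rest => ssValid I c S ∧ schedValidFrom I (stepConfig c S) rest

/-- `B` is exactly the set of sources of the DAG. -/
def initB (I : Inst ν) (B : Finset ν) : Prop := ∀ v, v ∈ B ↔ isSource I v

/-- A valid MBSP schedule: starts with empty caches and the sources in slow memory,
every transition is legal and the memory bound holds throughout, and at the end
every sink is in slow memory. -/
def Valid (I : Inst ν) (sched : Schedule ν I.P) : Prop :=
  ∃ B0 : Finset ν, initB I B0 ∧
    schedValidFrom I ⟨fun _ => ∅, B0⟩ sched ∧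
    ∀ v, isSink I v → v ∈ (runSched (⟨fun _ => ∅, B0⟩ : Config ν I.P) sched).B

def listCost (I : Inst ν) (l : List (Op ν)) : ℝ := (l.map (opCost I)).sum

def ioCost (I : Inst ν) (l : List ν) : ℝ := (l.map (fun v => I.μ v * I.g)).sum

/-- The synchronous cost of a superstep. -/
noncomputable def ssCost (I : Inst ν) (S : Superstep ν I.P) : ℝ :=
  (⨆ p : Fin I.P, listCost I (S.comp p)) + (⨆ p : Fin I.P, ioCost I (S.save p)) +
    (⨆ p : Fin I.P, ioCost I (S.load p)) + I.L

/-- The synchronous cost of a schedule. -/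
noncomputable def syncCost (I : Inst ν) (sched : Schedule ν I.P) : ℝ :=
  (sched.map (ssCost I)).sum

/-- Finishing times of the saves in a save phase starting at time `t`. -/
def saveFinishes (I : Inst ν) : ℝ → List ν → List (ν × ℝ)
  | _, [] => []
  | t, v :: rest => (v, t + I.μ v * I.g) :: saveFinishes I (t + I.μ v * I.g) rest

def minSaveTime (entries : List (ν × ℝ)) (v : ν) : Option ℝ :=
  ((entries.filter (fun e => e.1 == v)).map Prod.snd).min?

/-- Finishing time of a load phase: each load waits for the value to be available
in slow memory (time `Γ v`). -/
def loadFold (I : Inst ν) (Γ : ν → Option ℝ) : ℝ → List ν → ℝ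
  | t, [] => t
  | t, v :: rest => loadFold I Γ (max t ((Γ v).getD 0) + I.μ v * I.g) rest

/-- One superstep of the asynchronous execution: updates the finishing time of
every processor and the availability times `Γ` of the values in slow memory. -/
def asyncSS (I : Inst ν) (S : Superstep ν I.P)
    (st : (Fin I.P → ℝ) × (ν → Option ℝ)) : (Fin I.P → ℝ) × (ν → Option ℝ) :=
  let t1 : Fin I.P → ℝ := fun p => st.1 p + listCost I (S.comp p)
  let entries : List (ν × ℝ) :=
    ((List.finRange I.P).map (fun p => saveFinishes I (t1 p) (S.save p))).flatten
  let Γ' : ν → Option ℝ := fun v => (st.2 v).orElse (fun _ => minSaveTime entries v)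
  let t2 : Fin I.P → ℝ := fun p => t1 p + ioCost I (S.save p)
  (fun p => loadFold I Γ' (t2 p) (S.load p), Γ')

def asyncRun (I : Inst ν) (st : (Fin I.P → ℝ) × (ν → Option ℝ)) :
    Schedule ν I.P → (Fin I.P → ℝ) × (ν → Option ℝ)
  | [] => st
  | S :: rest => asyncRun I (asyncSS I S st) rest

/-- The asynchronous cost (makespan) of a schedule. -/
noncomputable def asyncCost (I : Inst ν) (sched : Schedule ν I.P) : ℝ :=
  ⨆ p : Fin I.P, (asyncRun I (fun _ => (0 : ℝ), fun _ => none) sched).1 p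

end MBSP

namespace MBSP

/-- Nodes of the construction `G'(Z)`. -/
inductive G2Node where
  | s | u1 | u2 | u3 | u4 | v1 | v2 | v3 | v4 | w
deriving DecidableEq

instance : Fintype G2Node where
  elems := {.s, .u1, .u2, .u3, .u4, .v1, .v2, .v3, .v4, .w}
  complete := by intro x; cases x <;> simp

/-- Edges of `G'(Z)`: `u1, u2 → u3, u4`; `v1 → v2, v3, v4`; `s → u1, u2, v1, w`. -/
def g2Edge : G2Node → G2Node → Prop
  | .u1, .u3 => True
  | .u1, .u4 => True
  | .u2, .u3 => True
  | .u2, .u4 => True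
  | .v1, .v2 => True
  | .v1, .v3 => True
  | .v1, .v4 => True
  | .s, .u1 => True
  | .s, .u2 => True
  | .s, .v1 => True
  | .s, .w => True
  | _, _ => False

/-- Compute weights of `G'(Z)`. -/
def g2Omega (Z : ℕ) : G2Node → ℝ
  | .s => 0
  | .u1 => (Z : ℝ) - 1
  | .u2 => (Z : ℝ) - 1
  | .u3 => 2 * (Z : ℝ)
  | .u4 => 2 * (Z : ℝ)
  | .v1 => 2 * (Z : ℝ)
  | .v2 => (Z : ℝ) - 1
  | .v3 => (Z : ℝ) - 1
  | .v4 => (Z : ℝ) - 1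
  | .w => (Z : ℝ) - 1

/-- The MBSP instance on `G'(Z)` with `P = 5` processors, `g = 0`, `L = 0`,
unit memory weights and effectively unbounded cache `r = Σ_v μ(v)`. -/
def g2Inst (Z : ℕ) : Inst G2Node where
  edge := g2Edge
  ω := g2Omega Z
  μ := fun _ => 1
  P := 5
  r := ∑ _v : G2Node, (1 : ℝ)
  g := 0
  L := 0


section Aux
variable {ν : Type} [DecidableEq ν] {P : ℕ}

/-- Nodes computed by a list of operations. -/
def compF (l : List (Op ν)) : Finset ν :=
  (l.filterMap fun op => match op with | .compute v => some v | _ => none).toFinset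

lemma mem_compF {l : List (Op ν)} {v : ν} : v ∈ compF l ↔ Op.compute v ∈ l := by
  simp only [compF, List.mem_toFinset, List.mem_filterMap]
  constructor
  · rintro ⟨op, hop, h⟩
    cases op <;> simp_all
  · intro h; exact ⟨_, h, rfl⟩

lemma compF_cons_compute (v : ν) (l : List (Op ν)) :
    compF (Op.compute v :: l) = insert v (compF l) := by
  ext x; simp [mem_compF, Finset.mem_insert, List.mem_cons]

lemma compF_cons_delete (v : ν) (l : List (Op ν)) :
    compF (Op.delete v :: l) = compF l := by
  ext x; simp [mem_compF, List.mem_cons]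

lemma run_fst_subset {R B : Finset ν} {l : List (Op ν)} (h : compOnly l) :
    (run R B l).1 ⊆ R ∪ compF l := by
  induction l generalizing R B with
  | nil => simp [run, compF]
  | cons op rest ih =>
    have hop := h op List.mem_cons_self
    have hrest : compOnly rest := fun o ho => h o (List.mem_cons_of_mem _ ho)
    obtain ⟨v, rfl⟩ | ⟨v, rfl⟩ := hop
    · show (run (insert v R) B rest).1 ⊆ _
      refine (ih hrest).trans ?_
      rw [compF_cons_compute]
      intro x hx
      rcases Finset.mem_union.1 hx with hx | hx
      · rcases Finset.mem_insert.1 hx with rfl | hx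
        · exact Finset.mem_union_right _ (Finset.mem_insert_self _ _)
        · exact Finset.mem_union_left _ hx
      · exact Finset.mem_union_right _ (Finset.mem_insert_of_mem hx)
    · show (run (R.erase v) B rest).1 ⊆ _
      refine (ih hrest).trans ?_
      rw [compF_cons_delete]
      exact Finset.union_subset_union (Finset.erase_subset _ _) le_rfl

lemma seq_parent {I : Inst ν} {R B : Finset ν} {l : List (Op ν)}
    (hco : compOnly l) (hsv : seqValid I R B l) {v u : ν}
    (hv : Op.compute v ∈ l) (hu : I.edge u v) : u ∈ R ∪ compF l := by
  induction l generalizing R B with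
  | nil => simp at hv
  | cons op rest ih =>
    have hop := hco op List.mem_cons_self
    have hrest : compOnly rest := fun o ho => hco o (List.mem_cons_of_mem _ ho)
    obtain ⟨x, rfl⟩ | ⟨x, rfl⟩ := hop
    · rcases List.mem_cons.1 hv with heq | hv'
      · obtain rfl : v = x := by injection heq
        have := hsv.1.2 u hu
        exact Finset.mem_union_left _ this
      · have h2 := ih hrest hsv.2.2 hv'
        rw [compF_cons_compute]
        rcases Finset.mem_union.1 h2 with hx | hx
        · rcases Finset.mem_insert.1 hx with rfl | hx
          · exact Finset.mem_union_right _ (Finset.mem_insert_self _ _)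
          · exact Finset.mem_union_left _ hx
        · exact Finset.mem_union_right _ (Finset.mem_insert_of_mem hx)
    · rcases List.mem_cons.1 hv with heq | hv'
      · exact absurd heq (by simp)
      · have h2 := ih hrest hsv.2.2 hv'
        rw [compF_cons_delete]
        rcases Finset.mem_union.1 h2 with hx | hx
        · exact Finset.mem_union_left _ (Finset.mem_of_mem_erase hx)
        · exact Finset.mem_union_right _ hx

lemma foldl_erase_subset (l : List ν) (s : Finset ν) : l.foldl Finset.erase s ⊆ s := by
  induction l generalizing s with
  | nil => exact Finset.Subset.refl s
  | cons a l ih => exact Finset.Subset.trans (ih _) (Finset.erase_subset _ _)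

/-- All nodes computed in a superstep. -/
def compSS [Fintype (Fin P)] (S : Superstep ν P) : Finset ν :=
  Finset.univ.biUnion fun p => compF (S.comp p)

lemma mem_compSS {S : Superstep ν P} {v : ν} :
    v ∈ compSS S ↔ ∃ p, Op.compute v ∈ S.comp p := by
  simp [compSS, mem_compF]

end Aux


section Aux2
variable {ν : Type} [DecidableEq ν]

lemma step_inv {I : Inst ν} {c : Config ν I.P} {S : Superstep ν I.P} {A : Finset ν}
    (hss : ssValid I c S) (hR : ∀ p, c.R p ⊆ A) (hB : c.B ⊆ A) :
    (∀ p, (stepConfig c S).R p ⊆ A ∪ compSS S) ∧ (stepConfig c S).B ⊆ A ∪ compSS S := by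
  have hcompF : ∀ p, compF (S.comp p) ⊆ compSS S := by
    intro p v hv
    exact mem_compSS.2 ⟨p, mem_compF.1 hv⟩
  have hAC : ∀ p, afterComp c S p ⊆ A ∪ compSS S := by
    intro p
    refine (run_fst_subset (hss.1 p)).trans ?_
    exact Finset.union_subset ((hR p).trans (Finset.subset_union_left))
      ((hcompF p).trans (Finset.subset_union_right))
  have hNB : newB c S ⊆ A ∪ compSS S := by
    refine Finset.union_subset (hB.trans (Finset.subset_union_left)) ?_
    intro v hv
    obtain ⟨p, _, hp⟩ := Finset.mem_biUnion.1 hv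
    exact hAC p (hss.2.2.1 p v (List.mem_toFinset.1 hp))
  refine ⟨?_, hNB⟩
  intro p
  show afterLoad c S p ⊆ _
  refine Finset.union_subset (((foldl_erase_subset _ _).trans (hAC p))) ?_
  intro v hv
  exact hNB (hss.2.2.2.1 p v (List.mem_toFinset.1 hv))

/-- Default (empty) superstep. -/
def defSS {P : ℕ} : Superstep ν P := ⟨fun _ => [], fun _ => [], fun _ => [], fun _ => []⟩

/-- `Ev sched t p v`: in superstep `t`, processor `p` computes `v`. -/
def Ev {P : ℕ} (sched : Schedule ν P) (t : ℕ) (p : Fin P) (v : ν) : Prop :=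
  Op.compute v ∈ (sched.getD t defSS).comp p

lemma ev_lt {P : ℕ} {sched : Schedule ν P} {t : ℕ} {p : Fin P} {v : ν}
    (h : Ev sched t p v) : t < sched.length := by
  by_contra hc
  rw [Ev, List.getD_eq_default _ _ (not_lt.1 hc)] at h
  simp [defSS] at h

lemma ev_cons_succ {P : ℕ} {S : Superstep ν P} {sched : Schedule ν P} {t : ℕ} {p : Fin P} {v : ν} :
    Ev (S :: sched) (t + 1) p v ↔ Ev sched t p v := Iff.rfl

lemma ev_cons_zero {P : ℕ} {S : Superstep ν P} {sched : Schedule ν P} {p : Fin P} {v : ν} :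
    Ev (S :: sched) 0 p v ↔ Op.compute v ∈ S.comp p := Iff.rfl

lemma ord {I : Inst ν} (sched : Schedule ν I.P) :
    ∀ (c : Config ν I.P) (A : Finset ν),
    (∀ p, c.R p ⊆ A) → (c.B ⊆ A) → schedValidFrom I c sched →
    ∀ (t : ℕ) (p : Fin I.P) (v u : ν), Ev sched t p v → I.edge u v →
      u ∈ A ∨ (∃ t' q, t' < t ∧ Ev sched t' q u) ∨ Ev sched t p u := by
  induction sched with
  | nil =>
    intro c A _ _ _ t p v u hev _
    exact absurd (ev_lt hev) (by simp)
  | cons S rest ih =>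
    intro c A hR hB hval t p v u hev hedge
    match t with
    | 0 =>
      have h := seq_parent (hval.1.1 p) (hval.1.2.1 p) (ev_cons_zero.1 hev) hedge
      rcases Finset.mem_union.1 h with h | h
      · exact Or.inl (hR p h)
      · exact Or.inr (Or.inr (ev_cons_zero.2 (mem_compF.1 h)))
    | t + 1 =>
      have hstep := step_inv hval.1 hR hB
      have := ih (stepConfig c S) (A ∪ compSS S) hstep.1 hstep.2 hval.2
        t p v u (ev_cons_succ.1 hev) hedge
      rcases this with h | ⟨t', q, ht', hev'⟩ | h
      · rcases Finset.mem_union.1 h with h | h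
        · exact Or.inl h
        · obtain ⟨q, hq⟩ := mem_compSS.1 h
          exact Or.inr (Or.inl ⟨0, q, Nat.succ_pos _, ev_cons_zero.2 hq⟩)
      · exact Or.inr (Or.inl ⟨t' + 1, q, Nat.succ_lt_succ ht', ev_cons_succ.2 hev'⟩)
      · exact Or.inr (Or.inr (ev_cons_succ.2 h))

/-- All nodes computed during a schedule. -/
def allComp {P : ℕ} [Fintype (Fin P)] : Schedule ν P → Finset ν
  | [] => ∅
  | S :: rest => compSS S ∪ allComp rest

lemma mem_allComp {P : ℕ} {sched : Schedule ν P} {v : ν} :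
    v ∈ allComp sched ↔ ∃ t p, Ev sched t p v := by
  induction sched with
  | nil =>
    simp only [allComp, Finset.notMem_empty, false_iff]
    rintro ⟨t, p, h⟩
    exact absurd (ev_lt h) (by simp)
  | cons S rest ih =>
    simp only [allComp, Finset.mem_union, ih, mem_compSS]
    constructor
    · rintro (⟨p, hp⟩ | ⟨t, p, h⟩)
      · exact ⟨0, p, ev_cons_zero.2 hp⟩
      · exact ⟨t + 1, p, ev_cons_succ.2 h⟩
    · rintro ⟨t, p, h⟩
      match t with
      | 0 => exact Or.inl ⟨p, ev_cons_zero.1 h⟩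
      | t + 1 => exact Or.inr ⟨t, p, ev_cons_succ.1 h⟩

lemma finalB_subset {I : Inst ν} (sched : Schedule ν I.P) :
    ∀ (c : Config ν I.P) (A : Finset ν),
    (∀ p, c.R p ⊆ A) → (c.B ⊆ A) → schedValidFrom I c sched →
    (runSched c sched).B ⊆ A ∪ allComp sched := by
  induction sched with
  | nil =>
    intro c A _ hB _
    exact hB.trans (Finset.subset_union_left)
  | cons S rest ih =>
    intro c A hR hB hval
    have hstep := step_inv hval.1 hR hB
    refine (ih (stepConfig c S) (A ∪ compSS S) hstep.1 hstep.2 hval.2).trans ?_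
    rw [Finset.union_assoc]
    exact Finset.union_subset_union (Finset.Subset.refl _) (Finset.Subset.refl _)

end Aux2


section Aux3
variable {ν : Type} [DecidableEq ν]

lemma listCost_nonneg {I : Inst ν} (hω : ∀ v, 0 ≤ I.ω v) (hg : I.g = 0)
    (l : List (Op ν)) : 0 ≤ listCost I l := by
  apply List.sum_nonneg
  intro x hx
  obtain ⟨op, _, rfl⟩ := List.mem_map.1 hx
  cases op <;> simp [opCost, hg, hω]

lemma listCost_cons {I : Inst ν} (op : Op ν) (l : List (Op ν)) :
    listCost I (op :: l) = opCost I op + listCost I l := by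
  simp [listCost]

lemma sum_le_listCost {I : Inst ν} (hω : ∀ v, 0 ≤ I.ω v) (hg : I.g = 0) :
    ∀ (l : List (Op ν)) (A : Finset ν), (∀ v ∈ A, Op.compute v ∈ l) →
    ∑ v ∈ A, I.ω v ≤ listCost I l := by
  intro l
  induction l with
  | nil =>
    intro A hA
    have : A = ∅ := Finset.eq_empty_of_forall_notMem fun v hv => by simpa using hA v hv
    simp [this, listCost]
  | cons op rest ih =>
    intro A hA
    rw [listCost_cons]
    by_cases hop : ∃ x, op = Op.compute x ∧ x ∈ A
    · obtain ⟨x, rfl, hxA⟩ := hop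
      have hsub : ∀ v ∈ A.erase x, Op.compute v ∈ rest := by
        intro v hv
        have hvx := Finset.ne_of_mem_erase hv
        rcases List.mem_cons.1 (hA v (Finset.mem_of_mem_erase hv)) with heq | h
        · exact absurd (by injection heq) hvx
        · exact h
      calc ∑ v ∈ A, I.ω v = ∑ v ∈ A.erase x, I.ω v + I.ω x :=
            (Finset.sum_erase_add A _ hxA).symm
        _ ≤ listCost I rest + I.ω x := by
            exact add_le_add (ih _ hsub) le_rfl
        _ = opCost I (Op.compute x) + listCost I rest := by
            simp [opCost]; ring
    · have hsub : ∀ v ∈ A, Op.compute v ∈ rest := by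
        intro v hv
        rcases List.mem_cons.1 (hA v hv) with heq | h
        · exact absurd ⟨v, heq.symm, hv⟩ hop
        · exact h
      have h0 : 0 ≤ opCost I op := by
        cases op <;> simp [opCost, hg, hω]
      linarith [ih A hsub]

/-- max compute cost in superstep `t`. -/
noncomputable def mcost (I : Inst ν) (sched : Schedule ν I.P) (t : ℕ) : ℝ :=
  ⨆ p : Fin I.P, listCost I ((sched.getD t defSS).comp p)

lemma le_mcost (I : Inst ν) (sched : Schedule ν I.P) (t : ℕ) (p : Fin I.P) :
    listCost I ((sched.getD t defSS).comp p) ≤ mcost I sched t := by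
  exact le_ciSup (Set.Finite.bddAbove
    (Set.finite_range (fun p : Fin I.P => listCost I ((sched.getD t defSS).comp p)))) p

lemma mcost_nonneg {I : Inst ν} (hω : ∀ v, 0 ≤ I.ω v) (hg : I.g = 0) (hP : 0 < I.P)
    (sched : Schedule ν I.P) (t : ℕ) : 0 ≤ mcost I sched t :=
  le_trans (listCost_nonneg hω hg _) (le_mcost I sched t ⟨0, hP⟩)

lemma ioCost_zero {I : Inst ν} (hg : I.g = 0) (l : List ν) : ioCost I l = 0 := by
  simp [ioCost, hg]

lemma ssCost_eq {I : Inst ν} (hg : I.g = 0) (hL : I.L = 0) (hP : 0 < I.P)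
    (S : Superstep ν I.P) : ssCost I S = ⨆ p : Fin I.P, listCost I (S.comp p) := by
  have : Nonempty (Fin I.P) := ⟨⟨0, hP⟩⟩
  simp [ssCost, ioCost_zero hg, hL, ciSup_const]

lemma syncCost_eq_sum {I : Inst ν} (hg : I.g = 0) (hL : I.L = 0) (hP : 0 < I.P)
    (sched : Schedule ν I.P) :
    syncCost I sched = ∑ t ∈ Finset.range sched.length, mcost I sched t := by
  induction sched with
  | nil => simp [syncCost]
  | cons S rest ih =>
    have h1 : syncCost I (S :: rest) = ssCost I S + syncCost I rest := by
      simp [syncCost]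
    rw [h1, ih, List.length_cons, Finset.sum_range_succ']
    have h2 : ∀ t, mcost I (S :: rest) (t + 1) = mcost I rest t := fun t => rfl
    have h3 : mcost I (S :: rest) 0 = ssCost I S := by
      rw [ssCost_eq hg hL hP]; rfl
    simp only [h2, h3]
    ring

lemma sum_mcost_le {I : Inst ν} (hω : ∀ v, 0 ≤ I.ω v) (hg : I.g = 0) (hL : I.L = 0)
    (hP : 0 < I.P) (sched : Schedule ν I.P) (T : Finset ℕ)
    (hT : ∀ t ∈ T, t < sched.length) :
    ∑ t ∈ T, mcost I sched t ≤ syncCost I sched := by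
  rw [syncCost_eq_sum hg hL hP]
  apply Finset.sum_le_sum_of_subset_of_nonneg
  · intro t ht; exact Finset.mem_range.2 (hT t ht)
  · intro t _ _; exact mcost_nonneg hω hg hP sched t

end Aux3


section G2
open G2Node

instance : DecidableRel g2Edge := fun a b => by
  cases a <;> cases b <;> simp only [g2Edge] <;> infer_instance

lemma g2Omega_nonneg (Z : ℕ) (hZ : 2 ≤ Z) : ∀ v, 0 ≤ (g2Inst Z).ω v := by
  have h2 : (2:ℝ) ≤ (Z:ℝ) := by exact_mod_cast hZ
  intro v
  cases v <;> simp [g2Inst, g2Omega] <;> linarith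

lemma g2_g : (g2Inst Z).g = 0 := rfl
lemma g2_L : (g2Inst Z).L = 0 := rfl
lemma g2_P : (g2Inst Z).P = 5 := rfl

lemma ev_bound (Z : ℕ) (hZ : 2 ≤ Z) (sched : Schedule G2Node 5) (t : ℕ) (p : Fin 5)
    (A : Finset G2Node) (hA : ∀ v ∈ A, Ev sched t p v) :
    ∑ v ∈ A, g2Omega Z v ≤ mcost (g2Inst Z) sched t := by
  have h1 : ∑ v ∈ A, g2Omega Z v = ∑ v ∈ A, (g2Inst Z).ω v := rfl
  rw [h1]
  exact le_trans (sum_le_listCost (g2Omega_nonneg Z hZ) rfl _ A hA)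
    (le_mcost (g2Inst Z) sched t p)

lemma ev_bound1 (Z : ℕ) (hZ : 2 ≤ Z) (sched : Schedule G2Node 5) {t : ℕ} {p : Fin 5}
    {v : G2Node} (h : Ev sched t p v) : g2Omega Z v ≤ mcost (g2Inst Z) sched t := by
  have := ev_bound Z hZ sched t p {v} (by simpa using h)
  simpa using this

lemma g2_source_eq (Z : ℕ) {v : G2Node} (h : isSource (g2Inst Z) v) : v = G2Node.s := by
  cases v
  · rfl
  all_goals exfalso; apply h
  · exact ⟨G2Node.s, trivial⟩
  · exact ⟨G2Node.s, trivial⟩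
  · exact ⟨G2Node.u1, trivial⟩
  · exact ⟨G2Node.u1, trivial⟩
  · exact ⟨G2Node.s, trivial⟩
  · exact ⟨G2Node.v1, trivial⟩
  · exact ⟨G2Node.v1, trivial⟩
  · exact ⟨G2Node.v1, trivial⟩
  · exact ⟨G2Node.s, trivial⟩

lemma g2_sink_u3 (Z : ℕ) : isSink (g2Inst Z) G2Node.u3 := by rintro ⟨u, h⟩; cases u <;> exact h
lemma g2_sink_u4 (Z : ℕ) : isSink (g2Inst Z) G2Node.u4 := by rintro ⟨u, h⟩; cases u <;> exact h
lemma g2_sink_v2 (Z : ℕ) : isSink (g2Inst Z) G2Node.v2 := by rintro ⟨u, h⟩; cases u <;> exact h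

theorem g2_lower (Z : ℕ) (hZ : 2 ≤ Z) (sched : Schedule G2Node 5)
    (hval : Valid (g2Inst Z) sched) : 4 * (Z:ℝ) - 2 ≤ syncCost (g2Inst Z) sched := by
  have hZ' : (2:ℝ) ≤ (Z:ℝ) := by exact_mod_cast hZ
  have hω := g2Omega_nonneg Z hZ
  obtain ⟨B0, hB0, hsched, hsinks⟩ := hval
  set c0 : Config G2Node 5 := ⟨fun _ => ∅, B0⟩ with hc0
  have hB0sub : B0 ⊆ ({G2Node.s} : Finset G2Node) := by
    intro v hv
    exact Finset.mem_singleton.2 (g2_source_eq Z ((hB0 v).1 hv))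
  have hRsub : ∀ p : Fin 5, c0.R p ⊆ ({G2Node.s} : Finset G2Node) := by
    intro p v hv; simp [hc0] at hv
  -- events for sinks
  have hget : ∀ v : G2Node, v ≠ G2Node.s → v ∈ (runSched c0 sched).B →
      ∃ t p, Ev sched t p v := by
    intro v hv hmem
    have := finalB_subset (I := g2Inst Z) sched c0 _ hRsub hB0sub hsched hmem
    rcases Finset.mem_union.1 this with h | h
    · exact absurd (Finset.mem_singleton.1 h) hv
    · exact mem_allComp.1 h
  obtain ⟨t3, p3, E3⟩ := hget G2Node.u3 (by simp) (hsinks _ (g2_sink_u3 Z))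
  obtain ⟨t4, p4, E4⟩ := hget G2Node.u4 (by simp) (hsinks _ (g2_sink_u4 Z))
  obtain ⟨t2, q2, E2⟩ := hget G2Node.v2 (by simp) (hsinks _ (g2_sink_v2 Z))
  have L3 := ev_lt E3
  have L4 := ev_lt E4
  have L2 := ev_lt E2
  -- parent facts
  have hord := ord (I := g2Inst Z) sched c0 ({G2Node.s} : Finset G2Node) hRsub hB0sub hsched
  have clean : ∀ {t : ℕ} {p : Fin 5} {u v : G2Node}, u ≠ G2Node.s → Ev sched t p v →
      (g2Inst Z).edge u v →
      (∃ t' q, t' < t ∧ Ev sched t' q u) ∨ Ev sched t p u := by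
    intro t p u v hu hev hedge
    rcases hord t p v u hev hedge with h | h | h
    · exact absurd (Finset.mem_singleton.1 h) hu
    · exact Or.inl h
    · exact Or.inr h
  -- abbreviations
  set M := mcost (g2Inst Z) sched with hMdef
  set C := syncCost (g2Inst Z) sched with hCdef
  have hMnn : ∀ t, 0 ≤ M t := fun t =>
    mcost_nonneg hω rfl (by norm_num [g2_P]) sched t
  have sum1 : ∀ t, t < sched.length → M t ≤ C := by
    intro t ht
    have := sum_mcost_le hω rfl rfl (by norm_num [g2_P]) sched {t} (by intro t' ht'; rw [Finset.mem_singleton.1 ht']; exact ht)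
    simpa using this
  have sum2 : ∀ a b, a ≠ b → a < sched.length → b < sched.length → M a + M b ≤ C := by
    intro a b hab ha hb
    have := sum_mcost_le hω rfl rfl (by norm_num [g2_P]) sched {a, b} (by
      intro t ht
      rcases Finset.mem_insert.1 ht with rfl | ht
      · exact ha
      · rw [Finset.mem_singleton.1 ht]; exact hb)
    rwa [Finset.sum_pair hab] at this
  have sum3 : ∀ a b c, a ≠ b → a ≠ c → b ≠ c → a < sched.length → b < sched.length →
      c < sched.length → M a + M b + M c ≤ C := by
    intro a b c hab hac hbc ha hb hc
    have := sum_mcost_le hω rfl rfl (by norm_num [g2_P]) sched {a, b, c} (by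
      intro t ht
      rcases Finset.mem_insert.1 ht with rfl | ht
      · exact ha
      rcases Finset.mem_insert.1 ht with rfl | ht
      · exact hb
      · rw [Finset.mem_singleton.1 ht]; exact hc)
    rw [Finset.sum_insert (by simp [hab, hac]), Finset.sum_insert (by simp [hbc]),
      Finset.sum_singleton] at this
    linarith
  -- single bounds
  have B3 : 2 * (Z:ℝ) ≤ M t3 := by simpa [g2Omega] using ev_bound1 Z hZ sched E3
  have B4 : 2 * (Z:ℝ) ≤ M t4 := by simpa [g2Omega] using ev_bound1 Z hZ sched E4
  by_cases h34 : t3 = t4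
  · subst h34
    by_cases hpp : p3 = p4
    · subst hpp
      have hb : 4 * (Z:ℝ) ≤ M t3 := by
        have := ev_bound Z hZ sched t3 p3 {G2Node.u3, G2Node.u4} (by
          intro v hv
          rcases Finset.mem_insert.1 hv with rfl | hv
          · exact E3
          · rw [Finset.mem_singleton.1 hv]; exact E4)
        rw [Finset.sum_pair (by simp)] at this
        simp only [g2Omega] at this
        rw [hMdef]
        linarith
      linarith [sum1 t3 L3]
    · -- distinct processors computing u3, u4 in superstep t3
      by_cases hboth : Ev sched t3 p3 G2Node.u1 ∧ Ev sched t3 p3 G2Node.u2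
      · have hb : 4 * (Z:ℝ) - 2 ≤ M t3 := by
          have := ev_bound Z hZ sched t3 p3 {G2Node.u1, G2Node.u2, G2Node.u3} (by
            intro v hv
            rcases Finset.mem_insert.1 hv with rfl | hv
            · exact hboth.1
            rcases Finset.mem_insert.1 hv with rfl | hv
            · exact hboth.2
            · rw [Finset.mem_singleton.1 hv]; exact E3)
          rw [Finset.sum_insert (by decide), Finset.sum_insert (by decide),
            Finset.sum_singleton] at this
          simp only [g2Omega] at this
          linarith
        linarith [sum1 t3 L3]
      · -- some u_i computed strictly earlier
        have hearly : ∃ T', T' < t3 ∧ T' < sched.length ∧ (Z:ℝ) - 1 ≤ M T' := by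
          rcases not_and_or.1 hboth with h | h
          · rcases clean (by simp) E3 (show (g2Inst Z).edge G2Node.u1 G2Node.u3 from trivial)
              with ⟨t', q, ht', E'⟩ | hsame
            · exact ⟨t', ht', ev_lt E', by simpa [g2Omega] using ev_bound1 Z hZ sched E'⟩
            · exact absurd hsame h
          · rcases clean (by simp) E3 (show (g2Inst Z).edge G2Node.u2 G2Node.u3 from trivial)
              with ⟨t', q, ht', E'⟩ | hsame
            · exact ⟨t', ht', ev_lt E', by simpa [g2Omega] using ev_bound1 Z hZ sched E'⟩
            · exact absurd hsame h
        obtain ⟨T', hT't3, hT'len, hT'b⟩ := hearly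
        have hne : T' ≠ t3 := Nat.ne_of_lt hT't3
        -- where is v1 computed?
        rcases clean (by simp) E2 (show (g2Inst Z).edge G2Node.v1 G2Node.v2 from trivial)
          with ⟨t1, q1, ht1, E1⟩ | hsame
        · -- v1 computed at t1 < t2
          have B1 : 2 * (Z:ℝ) ≤ M t1 := by simpa [g2Omega] using ev_bound1 Z hZ sched E1
          have L1 := ev_lt E1
          by_cases h1T' : t1 = T'
          · subst h1T'
            linarith [sum2 t1 t3 hne L1 L3]
          · by_cases h1T : t1 = t3
            · subst h1T
              have B2' : (Z:ℝ) - 1 ≤ M t2 := by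
                simpa [g2Omega] using ev_bound1 Z hZ sched E2
              have h1 : T' ≠ t2 := Nat.ne_of_lt (lt_trans hT't3 ht1)
              have h2 : t1 ≠ t2 := Nat.ne_of_lt ht1
              linarith [sum3 T' t1 t2 hne h1 h2 hT'len L1 L2]
            · linarith [sum3 T' t3 t1 hne (Ne.symm h1T') (Ne.symm h1T) hT'len L3 L1]
        · -- v1 computed by q2 in superstep t2 together with v2
          have hb2 : 3 * (Z:ℝ) - 1 ≤ M t2 := by
            have := ev_bound Z hZ sched t2 q2 {G2Node.v1, G2Node.v2} (by
              intro v hv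
              rcases Finset.mem_insert.1 hv with rfl | hv
              · exact hsame
              · rw [Finset.mem_singleton.1 hv]; exact E2)
            rw [Finset.sum_pair (by simp)] at this
            simp only [g2Omega] at this
            linarith
          by_cases h2T : t2 = t3
          · subst h2T
            linarith [sum2 T' t2 hne hT'len L2]
          · by_cases h2T' : t2 = T'
            · subst h2T'
              linarith [sum2 t2 t3 hne L2 L3]
            · linarith [sum3 T' t3 t2 hne (Ne.symm h2T') (Ne.symm h2T) hT'len L3 L2]
  · -- u3, u4 in different supersteps
    linarith [sum2 t3 t4 h34 L3 L4]

end G2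


section Conc
open G2Node Op

instance (Z : ℕ) : DecidableRel (g2Inst Z).edge :=
  fun a b => inferInstanceAs (Decidable (g2Edge a b))

instance (Z : ℕ) (v : G2Node) : Decidable (isSink (g2Inst Z) v) :=
  inferInstanceAs (Decidable ¬ _)

lemma g2_memOK (Z : ℕ) (R : Finset G2Node) : memOK (g2Inst Z) R := by
  show ∑ _v ∈ R, (1:ℝ) ≤ ∑ _v : G2Node, (1:ℝ)
  simp only [Finset.sum_const, nsmul_eq_mul, mul_one]
  exact_mod_cast Finset.card_le_univ R

lemma g2_initB (Z : ℕ) : initB (g2Inst Z) {G2Node.s} := by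
  intro v
  constructor
  · intro hv
    rw [Finset.mem_singleton.1 hv]
    rintro ⟨u, h⟩
    cases u <;> exact h
  · intro h
    exact Finset.mem_singleton.2 (g2_source_eq Z h)

/-- `opOKs`: the precondition part of `seqValid` (no memory bound). -/
def opOKsL {ν : Type} [DecidableEq ν] (I : Inst ν) (R B : Finset ν) : List (Op ν) → Prop
  | [] => True
  | op :: rest => opOK I R B op ∧ opOKsL I (applyOp R B op).1 (applyOp R B op).2 rest

instance decOpOK {ν : Type} [DecidableEq ν] [Fintype ν] (I : Inst ν) [DecidableRel I.edge]
    (R B : Finset ν) (op : Op ν) : Decidable (opOK I R B op) := by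
  cases op with
  | load v => exact inferInstanceAs (Decidable (v ∈ B))
  | save v => exact inferInstanceAs (Decidable (v ∈ R))
  | compute v => exact inferInstanceAs (Decidable ((∃ u, I.edge u v) ∧ ∀ u, I.edge u v → u ∈ R))
  | delete v => exact inferInstanceAs (Decidable True)

instance decOpOKsL {ν : Type} [DecidableEq ν] [Fintype ν] (I : Inst ν) [DecidableRel I.edge]
    (R B : Finset ν) (l : List (Op ν)) : Decidable (opOKsL I R B l) :=
  match l with
  | [] => isTrue trivial
  | op :: rest =>
    @instDecidableAnd _ _ (decOpOK I R B op)
      (decOpOKsL I (applyOp R B op).1 (applyOp R B op).2 rest)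

lemma seqValid_of_opOKsL {Z : ℕ} :
    ∀ (l : List (Op G2Node)) (R B : Finset G2Node),
    opOKsL (g2Inst Z) R B l → seqValid (g2Inst Z) R B l := by
  intro l
  induction l with
  | nil => intro R B _; trivial
  | cons op rest ih =>
    intro R B h
    exact ⟨h.1, g2_memOK Z _, ih _ _ h.2⟩

/-- Evaluation of a `Fin 5`-indexed supremum. -/
lemma ciSup_fin5_eq (f : Fin 5 → ℝ) (a : ℝ) (p0 : Fin 5) (h0 : f p0 = a)
    (hle : ∀ p, f p ≤ a) : (⨆ p, f p) = a :=
  le_antisymm (ciSup_le hle) (h0 ▸ le_ciSup (Set.Finite.bddAbove (Set.finite_range f)) p0)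

def ssLoadS : Superstep G2Node 5 :=
  ⟨fun _ => [], fun _ => [], fun _ => [], fun _ => [G2Node.s]⟩

def ssMain : Superstep G2Node 5 :=
  ⟨![[compute u1, compute u2, compute u3],
     [compute u1, compute u2, compute u4],
     [compute v1, compute v2, compute w],
     [compute v1, compute v3],
     [compute v1, compute v4]],
   ![[u3], [u4], [v2, w], [v3], [v4]],
   fun _ => [], fun _ => []⟩

def schedB : Schedule G2Node 5 := [ssLoadS, ssMain]

instance decCompOnly {ν : Type} [DecidableEq ν] [Fintype ν] (l : List (Op ν)) :
    Decidable (compOnly l) :=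
  inferInstanceAs (Decidable (∀ op ∈ l, (∃ v, op = Op.compute v) ∨ (∃ v, op = Op.delete v)))

def opOKE (R B : Finset G2Node) : Op G2Node → Prop
  | .load v => v ∈ B
  | .save v => v ∈ R
  | .compute v => (∃ u, g2Edge u v) ∧ ∀ u, g2Edge u v → u ∈ R
  | .delete _ => True

instance decOpOKE (R B : Finset G2Node) (op : Op G2Node) : Decidable (opOKE R B op) := by
  cases op with
  | load v => exact inferInstanceAs (Decidable (v ∈ B))
  | save v => exact inferInstanceAs (Decidable (v ∈ R))
  | compute v => exact inferInstanceAs (Decidable (_ ∧ _))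
  | delete v => exact inferInstanceAs (Decidable True)

def opOKsE (R B : Finset G2Node) : List (Op G2Node) → Prop
  | [] => True
  | op :: rest => opOKE R B op ∧ opOKsE (applyOp R B op).1 (applyOp R B op).2 rest

instance decOpOKsE (R B : Finset G2Node) (l : List (Op G2Node)) : Decidable (opOKsE R B l) :=
  match l with
  | [] => isTrue trivial
  | op :: rest =>
    @instDecidableAnd _ _ (decOpOKE R B op)
      (decOpOKsE (applyOp R B op).1 (applyOp R B op).2 rest)

lemma opOKsE_imp (Z : ℕ) : ∀ (l : List (Op G2Node)) (R B : Finset G2Node),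
    opOKsE R B l → opOKsL (g2Inst Z) R B l := by
  intro l
  induction l with
  | nil => intro R B _; trivial
  | cons op rest ih =>
    intro R B h
    refine ⟨?_, ih _ _ h.2⟩
    cases op <;> exact h.1

lemma seqValid_of_opOKsE (Z : ℕ) (l : List (Op G2Node)) (R B : Finset G2Node)
    (h : opOKsE R B l) : seqValid (g2Inst Z) R B l :=
  seqValid_of_opOKsL l R B (opOKsE_imp Z l R B h)

lemma schedB_valid (Z : ℕ) : Valid (g2Inst Z) schedB := by
  refine ⟨{G2Node.s}, g2_initB Z, ⟨?_, ?_, trivial⟩, ?_⟩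
  · refine ⟨?_, ?_, ?_, ?_, ?_⟩
    · exact (by decide : ∀ p : Fin 5, compOnly (ssLoadS.comp p))
    · intro p; trivial
    · intro p v hv; simp [ssLoadS] at hv
    · exact (by decide : ∀ p : Fin 5, ∀ v ∈ ssLoadS.load p,
        v ∈ newB (⟨fun _ => ∅, {G2Node.s}⟩ : Config G2Node 5) ssLoadS)
    · intro p; exact g2_memOK Z _
  · refine ⟨?_, ?_, ?_, ?_, ?_⟩
    · exact (by decide : ∀ p : Fin 5, compOnly (ssMain.comp p))
    · intro p
      apply seqValid_of_opOKsE
      revert p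
      exact (by decide : ∀ p : Fin 5, opOKsE
        ((stepConfig (⟨fun _ => ∅, {G2Node.s}⟩ : Config G2Node 5) ssLoadS).R p)
        ((stepConfig (⟨fun _ => ∅, {G2Node.s}⟩ : Config G2Node 5) ssLoadS).B)
        (ssMain.comp p))
    · exact (by decide : ∀ p : Fin 5, ∀ v ∈ ssMain.save p,
        v ∈ afterComp (stepConfig (⟨fun _ => ∅, {G2Node.s}⟩ : Config G2Node 5) ssLoadS) ssMain p)
    · exact (by decide : ∀ p : Fin 5, ∀ v ∈ ssMain.load p,
        v ∈ newB (stepConfig (⟨fun _ => ∅, {G2Node.s}⟩ : Config G2Node 5) ssLoadS) ssMain)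
    · intro p; exact g2_memOK Z _
  · have h : ∀ v : G2Node, (¬ ∃ u, g2Edge v u) →
        v ∈ (runSched (⟨fun _ => ∅, {G2Node.s}⟩ : Config G2Node 5) schedB).B := by decide
    intro v hv
    exact h v hv

lemma syncCost_schedB (Z : ℕ) (hZ : 2 ≤ Z) :
    syncCost (g2Inst Z) schedB = 4 * (Z:ℝ) - 2 := by
  have hZ' : (2:ℝ) ≤ (Z:ℝ) := by exact_mod_cast hZ
  have hP : 0 < (g2Inst Z).P := by norm_num [g2_P]
  have h0 : ssCost (g2Inst Z) ssLoadS = 0 := by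
    refine (ssCost_eq (I := g2Inst Z) rfl rfl hP ssLoadS).trans ?_
    exact ciSup_fin5_eq _ 0 0 (by simp [ssLoadS, listCost])
      (fun p => le_of_eq (by simp [ssLoadS, listCost]))
  have h1 : ssCost (g2Inst Z) ssMain = 4 * (Z:ℝ) - 2 := by
    refine (ssCost_eq (I := g2Inst Z) rfl rfl hP ssMain).trans ?_
    refine ciSup_fin5_eq _ _ 0 ?_ ?_
    · show listCost (g2Inst Z) [compute u1, compute u2, compute u3] = _
      simp [listCost, opCost, g2Inst, g2Omega]
      ring
    · intro p
      fin_cases p <;> simp [ssMain, listCost, opCost, g2Inst, g2Omega] <;> linarith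
  show ssCost (g2Inst Z) ssLoadS + (ssCost (g2Inst Z) ssMain + 0) = _
  linarith [h0, h1]

lemma asyncCost_eq_sup (Z : ℕ) (sched : Schedule G2Node 5) :
    asyncCost (g2Inst Z) sched =
      ⨆ p : Fin 5, (asyncRun (g2Inst Z) (fun _ => (0:ℝ), fun _ => none) sched).1 p := rfl

lemma asyncCost_schedB (Z : ℕ) (hZ : 2 ≤ Z) :
    4 * (Z:ℝ) - 2 ≤ asyncCost (g2Inst Z) schedB := by
  have key : (asyncRun (g2Inst Z) (fun _ => (0:ℝ), fun _ => none) schedB).1 (0 : Fin 5)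
      = 4 * (Z:ℝ) - 2 := by
    simp [schedB, asyncRun, asyncSS, ssLoadS, ssMain, loadFold, saveFinishes,
      minSaveTime, ioCost, listCost, opCost, g2Inst, g2Omega, List.finRange]
    ring
  rw [asyncCost_eq_sup]
  exact key ▸ le_ciSup (Set.Finite.bddAbove (Set.finite_range _)) (0 : Fin 5)

/-- Second superstep of the fast asynchronous schedule. -/
def ssC2 : Superstep G2Node 5 :=
  ⟨![[compute u1], [compute u2], [compute v1], [compute w], []],
    ![[u1], [u2], [v1], [w], []],
    fun _ => [],
    ![[u2], [u1], [], [v1], [v1]]⟩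

/-- Third superstep of the fast asynchronous schedule. -/
def ssC3 : Superstep G2Node 5 :=
  ⟨![[compute u3], [compute u4], [compute v2], [compute v3], [compute v4]],
    ![[u3], [u4], [v2], [v3], [v4]],
    fun _ => [], fun _ => []⟩

def schedC : Schedule G2Node 5 := [ssLoadS, ssC2, ssC3]

lemma schedC_valid (Z : ℕ) : Valid (g2Inst Z) schedC := by
  refine ⟨{G2Node.s}, g2_initB Z, ⟨?_, ?_, ?_, trivial⟩, ?_⟩
  · refine ⟨?_, ?_, ?_, ?_, ?_⟩
    · exact (by decide : ∀ p : Fin 5, compOnly (ssLoadS.comp p))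
    · intro p; trivial
    · intro p v hv; simp [ssLoadS] at hv
    · exact (by decide : ∀ p : Fin 5, ∀ v ∈ ssLoadS.load p,
        v ∈ newB (⟨fun _ => ∅, {G2Node.s}⟩ : Config G2Node 5) ssLoadS)
    · intro p; exact g2_memOK Z _
  · refine ⟨?_, ?_, ?_, ?_, ?_⟩
    · exact (by decide : ∀ p : Fin 5, compOnly (ssC2.comp p))
    · intro p
      apply seqValid_of_opOKsE
      revert p
      exact (by decide : ∀ p : Fin 5, opOKsE
        ((stepConfig (⟨fun _ => ∅, {G2Node.s}⟩ : Config G2Node 5) ssLoadS).R p)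
        ((stepConfig (⟨fun _ => ∅, {G2Node.s}⟩ : Config G2Node 5) ssLoadS).B)
        (ssC2.comp p))
    · exact (by decide : ∀ p : Fin 5, ∀ v ∈ ssC2.save p,
        v ∈ afterComp (stepConfig (⟨fun _ => ∅, {G2Node.s}⟩ : Config G2Node 5) ssLoadS) ssC2 p)
    · exact (by decide : ∀ p : Fin 5, ∀ v ∈ ssC2.load p,
        v ∈ newB (stepConfig (⟨fun _ => ∅, {G2Node.s}⟩ : Config G2Node 5) ssLoadS) ssC2)
    · intro p; exact g2_memOK Z _
  · refine ⟨?_, ?_, ?_, ?_, ?_⟩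
    · exact (by decide : ∀ p : Fin 5, compOnly (ssC3.comp p))
    · intro p
      apply seqValid_of_opOKsE
      revert p
      exact (by decide : ∀ p : Fin 5, opOKsE
        ((stepConfig (stepConfig (⟨fun _ => ∅, {G2Node.s}⟩ : Config G2Node 5) ssLoadS) ssC2).R p)
        ((stepConfig (stepConfig (⟨fun _ => ∅, {G2Node.s}⟩ : Config G2Node 5) ssLoadS) ssC2).B)
        (ssC3.comp p))
    · exact (by decide : ∀ p : Fin 5, ∀ v ∈ ssC3.save p,
        v ∈ afterComp (stepConfig (stepConfig (⟨fun _ => ∅, {G2Node.s}⟩ : Config G2Node 5)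
          ssLoadS) ssC2) ssC3 p)
    · exact (by decide : ∀ p : Fin 5, ∀ v ∈ ssC3.load p,
        v ∈ newB (stepConfig (stepConfig (⟨fun _ => ∅, {G2Node.s}⟩ : Config G2Node 5)
          ssLoadS) ssC2) ssC3)
    · intro p; exact g2_memOK Z _
  · have h : ∀ v : G2Node, (¬ ∃ u, g2Edge v u) →
        v ∈ (runSched (⟨fun _ => ∅, {G2Node.s}⟩ : Config G2Node 5) schedC).B := by decide
    intro v hv
    exact h v hv

lemma asyncCost_schedC (Z : ℕ) (hZ : 2 ≤ Z) :
    asyncCost (g2Inst Z) schedC ≤ 3 * (Z:ℝ) - 1 := by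
  have hZ' : (2:ℝ) ≤ (Z:ℝ) := by exact_mod_cast hZ
  rw [asyncCost_eq_sup]
  apply ciSup_le
  intro p
  fin_cases p <;>
    simp [schedC, asyncRun, asyncSS, ssLoadS, ssC2, ssC3, loadFold, saveFinishes,
      minSaveTime, ioCost, listCost, opCost, g2Inst, g2Omega, List.finRange] <;>
    first
      | linarith
      | (rw [sup_eq_right.mpr (show ((Z:ℝ) - 1) ≤ 2 * (Z:ℝ) by linarith)]; linarith)

end Conc

/-- On `G'(Z)` (`Z ≥ 2`) with `P = 5`, `g = L = 0`, unbounded cache: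
(a) the minimum synchronous cost over valid schedules equals `4Z − 2`;
(b) some valid schedule of synchronous cost `4Z − 2` has asynchronous cost at least
`4Z − 2`; (c) some valid schedule has asynchronous cost at most `3Z − 1`. -/
theorem statement_9 (Z : ℕ) (hZ : 2 ≤ Z) :
    sInf {c : ℝ | ∃ sched : Schedule G2Node 5, Valid (g2Inst Z) sched ∧
        syncCost (g2Inst Z) sched = c} = 4 * (Z : ℝ) - 2 ∧
    (∃ sched : Schedule G2Node 5, Valid (g2Inst Z) sched ∧
      syncCost (g2Inst Z) sched = 4 * (Z : ℝ) - 2 ∧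
      4 * (Z : ℝ) - 2 ≤ asyncCost (g2Inst Z) sched) ∧
    (∃ sched : Schedule G2Node 5, Valid (g2Inst Z) sched ∧
      asyncCost (g2Inst Z) sched ≤ 3 * (Z : ℝ) - 1) := by
  have hmem : (4 * (Z:ℝ) - 2) ∈ {c : ℝ | ∃ sched : Schedule G2Node 5,
      Valid (g2Inst Z) sched ∧ syncCost (g2Inst Z) sched = c} :=
    ⟨schedB, schedB_valid Z, syncCost_schedB Z hZ⟩
  have hlb : ∀ c ∈ {c : ℝ | ∃ sched : Schedule G2Node 5,
      Valid (g2Inst Z) sched ∧ syncCost (g2Inst Z) sched = c}, 4 * (Z:ℝ) - 2 ≤ c := by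
    rintro c ⟨sched, hv, rfl⟩
    exact g2_lower Z hZ sched hv
  refine ⟨le_antisymm (csInf_le ⟨4 * (Z:ℝ) - 2, hlb⟩ hmem) (le_csInf ⟨_, hmem⟩ hlb),
    ⟨schedB, schedB_valid Z, syncCost_schedB Z hZ, asyncCost_schedB Z hZ⟩,
    ⟨schedC, schedC_valid Z, asyncCost_schedC Z hZ⟩⟩

end MBSP
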